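/- For each t ∈ {0,1,…,T−1} and each x ∈ ℕ with x < ξ, there exists k0 ∈ ℕ such that for all k ≥ k0, preventive replacement is strictly suboptimal at (x,k): c_p + E_{(Z,K)}[Ṽ_{t+1}(Z, k+Z+K)] > E_{(Z,K)}[Ṽ_{t+1}(x+Z, k+Z+K)]. Consequently the optimal control limit δ^{(k,t)} converges to the failure threshold ξ as k → ∞. -/

import Mathlib

open Filter

/-- Negative Binomial pmf with real shape `r` and success probability `p`:
`NB(r,p)(z) = Γ(z+r)/(Γ(r)·z!)·p^r·(1−p)^z` for `r > 0`, and `NB(0,p)` is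
the point mass at `0`. -/
noncomputable def NB (r p : ℝ) (z : ℕ) : ℝ :=
  if r = 0 then (if z = 0 then (1 : ℝ) else 0)
  else Real.Gamma ((z : ℝ) + r) / (Real.Gamma r * (Nat.factorial z : ℝ)) * p ^ r * (1 - p) ^ z

/-- `p_t = (β0 + N·t)/(β0 + N·t + 1)`. -/
noncomputable def pt (β0 : ℝ) (N t : ℕ) : ℝ :=
  (β0 + (N : ℝ) * (t : ℝ)) / (β0 + (N : ℝ) * (t : ℝ) + 1)

/-- Expectation `E_{(Z,K)}[f(Z,K)]` with `Z ~ NB(α0+k, p_t)` and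
`K ~ NB((N−1)(α0+k), p_t)` independent. -/
noncomputable def EZK (α0 β0 : ℝ) (N t k : ℕ) (f : ℕ → ℕ → ℝ) : ℝ :=
  ∑' z : ℕ, ∑' κ : ℕ,
    NB (α0 + (k : ℝ)) (pt β0 N t) z * NB (((N : ℝ) - 1) * (α0 + (k : ℝ))) (pt β0 N t) κ * f z κ

lemma pt_pos {β0 : ℝ} (hβ0 : 0 < β0) (N t : ℕ) : 0 < pt β0 N t := by
  have h : (0:ℝ) < β0 + (N : ℝ) * (t : ℝ) := by positivity
  exact div_pos h (by linarith)

lemma pt_lt_one {β0 : ℝ} (hβ0 : 0 < β0) (N t : ℕ) : pt β0 N t < 1 := by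
  have h : (0:ℝ) < β0 + (N : ℝ) * (t : ℝ) := by positivity
  rw [pt, div_lt_one (by linarith)]
  linarith

lemma NB_nonneg {r p : ℝ} (hr : 0 ≤ r) (hp0 : 0 < p) (hp1 : p ≤ 1) (z : ℕ) :
    0 ≤ NB r p z := by
  rw [NB]
  split
  · split <;> norm_num
  · rename_i h
    have hr' : 0 < r := lt_of_le_of_ne hr (Ne.symm h)
    have h1 : 0 < Real.Gamma ((z:ℝ) + r) :=
      Real.Gamma_pos_of_pos (add_pos_of_nonneg_of_pos (Nat.cast_nonneg z) hr')
    have h2 : 0 < Real.Gamma r := Real.Gamma_pos_of_pos hr'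
    have h3 : (0:ℝ) < (Nat.factorial z : ℝ) := by exact_mod_cast z.factorial_pos
    have h4 : 0 < p ^ r := Real.rpow_pos_of_pos hp0 r
    have h5 : (0:ℝ) ≤ (1 - p) ^ z := pow_nonneg (by linarith) z
    positivity

lemma Gamma_nat_add {r : ℝ} (hr : 0 < r) (z : ℕ) :
    Real.Gamma ((z:ℝ) + r) = (∏ i ∈ Finset.range z, (r + (i:ℝ))) * Real.Gamma r := by
  induction z with
  | zero => simp
  | succ z ih =>
    have hzr : (z:ℝ) + r ≠ 0 := by positivity
    have : ((z+1 : ℕ):ℝ) + r = ((z:ℝ) + r) + 1 := by push_cast; ring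
    rw [this, Real.Gamma_add_one hzr, ih, Finset.prod_range_succ]
    ring

lemma NB_eq {r p : ℝ} (hr : 0 < r) (z : ℕ) :
    NB r p z = (∏ i ∈ Finset.range z, (r + (i:ℝ))) / (Nat.factorial z : ℝ) * p ^ r * (1 - p) ^ z := by
  have h2 : Real.Gamma r ≠ 0 := (Real.Gamma_pos_of_pos hr).ne'
  have h3 : (Nat.factorial z : ℝ) ≠ 0 := by exact_mod_cast z.factorial_pos.ne'
  rw [NB, if_neg hr.ne', Gamma_nat_add hr]
  field_simp

lemma ascFactorial_cast_prod (m z : ℕ) :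
    ((m.ascFactorial z : ℕ) : ℝ) = ∏ i ∈ Finset.range z, ((m:ℝ) + (i:ℝ)) := by
  induction z with
  | zero => simp
  | succ z ih =>
    rw [Nat.ascFactorial_succ, Finset.prod_range_succ, ← ih]
    push_cast
    ring

lemma NB_le_bound {r p : ℝ} (hr : 0 < r) (hp0 : 0 < p) (hp1 : p < 1) (z : ℕ) :
    NB r p z ≤ (((z + (⌈r⌉₊ - 1)).choose (⌈r⌉₊ - 1) : ℕ) : ℝ) * (1 - p) ^ z * p ^ r := by
  set m := ⌈r⌉₊ with hm
  have hm1 : 1 ≤ m := Nat.ceil_pos.mpr hr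
  have hrm : r ≤ (m:ℝ) := Nat.le_ceil r
  have hprod : (∏ i ∈ Finset.range z, (r + (i:ℝ))) ≤ ∏ i ∈ Finset.range z, ((m:ℝ) + (i:ℝ)) := by
    apply Finset.prod_le_prod
    · intro i _; positivity
    · intro i _; linarith
  have hasc : (∏ i ∈ Finset.range z, ((m:ℝ) + (i:ℝ)))
      = (Nat.factorial z : ℝ) * (((z + (m - 1)).choose (m - 1) : ℕ) : ℝ) := by
    rw [← ascFactorial_cast_prod]
    have h1 : m.ascFactorial z = Nat.factorial z * (m + z - 1).choose z :=
      Nat.ascFactorial_eq_factorial_mul_choose' m z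
    have h2 : m + z - 1 = z + (m - 1) := by omega
    have h3 : (z + (m - 1)).choose z = (z + (m - 1)).choose (m - 1) := by
      have hcs := Nat.choose_symm (n := z + (m - 1)) (k := m - 1) (by omega)
      rwa [show z + (m - 1) - (m - 1) = z by omega] at hcs
    rw [h1, h2, h3]
    push_cast
    ring
  have h3 : (0:ℝ) < (Nat.factorial z : ℝ) := by exact_mod_cast z.factorial_pos
  have h4 : (0:ℝ) < p ^ r := Real.rpow_pos_of_pos hp0 r
  have h5 : (0:ℝ) ≤ (1 - p) ^ z := pow_nonneg (by linarith) z
  rw [NB_eq hr]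
  have hdiv : (∏ i ∈ Finset.range z, (r + (i:ℝ))) / (Nat.factorial z : ℝ)
      ≤ (((z + (m - 1)).choose (m - 1) : ℕ) : ℝ) := by
    rw [div_le_iff₀ h3]
    calc (∏ i ∈ Finset.range z, (r + (i:ℝ))) ≤ ∏ i ∈ Finset.range z, ((m:ℝ) + (i:ℝ)) := hprod
    _ = (((z + (m - 1)).choose (m - 1) : ℕ) : ℝ) * (Nat.factorial z : ℝ) := by rw [hasc]; ring
  calc (∏ i ∈ Finset.range z, (r + (i:ℝ))) / (Nat.factorial z : ℝ) * p ^ r * (1 - p) ^ z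
      ≤ (((z + (m - 1)).choose (m - 1) : ℕ) : ℝ) * p ^ r * (1 - p) ^ z := by
        apply mul_le_mul_of_nonneg_right _ h5
        exact mul_le_mul_of_nonneg_right hdiv h4.le
    _ = (((z + (m - 1)).choose (m - 1) : ℕ) : ℝ) * (1 - p) ^ z * p ^ r := by ring

lemma hasSum_dominating {r p : ℝ} (hr : 0 < r) (hp0 : 0 < p) (hp1 : p < 1) :
    HasSum (fun z : ℕ => (((z + (⌈r⌉₊ - 1)).choose (⌈r⌉₊ - 1) : ℕ) : ℝ) * (1 - p) ^ z * p ^ r)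
      (1 / p ^ (⌈r⌉₊) * p ^ r) := by
  set m := ⌈r⌉₊ with hm
  have hm1 : 1 ≤ m := Nat.ceil_pos.mpr hr
  have hq : ‖(1 - p)‖ < 1 := by
    rw [Real.norm_eq_abs, abs_lt]; constructor <;> linarith
  have h := hasSum_choose_mul_geometric_of_norm_lt_one (𝕜 := ℝ) (m - 1) hq
  have h2 : (1 : ℝ) - (1 - p) = p := by ring
  rw [h2, show m - 1 + 1 = m by omega] at h
  exact h.mul_right (p ^ r)

lemma summable_NB {r p : ℝ} (hr : 0 ≤ r) (hp0 : 0 < p) (hp1 : p < 1) :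
    Summable (NB r p) := by
  rcases eq_or_lt_of_le hr with h0 | hr'
  · apply summable_of_ne_finset_zero (s := {0})
    intro z hz
    simp only [Finset.mem_singleton] at hz
    rw [NB, if_pos h0.symm, if_neg hz]
  · exact Summable.of_nonneg_of_le (NB_nonneg hr hp0 hp1.le) (NB_le_bound hr' hp0 hp1)
      (hasSum_dominating hr' hp0 hp1).summable

lemma tsum_NB_le {r p : ℝ} (hr : 0 ≤ r) (hp0 : 0 < p) (hp1 : p < 1) :
    (∑' z, NB r p z) ≤ 1 / p := by
  rcases eq_or_lt_of_le hr with h0 | hr'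
  · have : NB r p = fun z : ℕ => if z = 0 then (1:ℝ) else 0 := by
      funext z; rw [NB, if_pos h0.symm]
    rw [this, tsum_ite_eq]
    rw [le_div_iff₀ hp0, one_mul]; exact hp1.le
  · have hsum := hasSum_dominating hr' hp0 hp1
    have hle : (∑' z, NB r p z) ≤ 1 / p ^ (⌈r⌉₊) * p ^ r := by
      rw [← hsum.tsum_eq]
      exact Summable.tsum_le_tsum (NB_le_bound hr' hp0 hp1) (summable_NB hr hp0 hp1) hsum.summable
    refine hle.trans ?_
    set m := ⌈r⌉₊ with hm
    have hm1 : 1 ≤ m := Nat.ceil_pos.mpr hr'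
    have hrlow : (m:ℝ) - 1 ≤ r := by
      have := Nat.ceil_lt_add_one hr'.le (R := ℝ)
      rw [← hm] at this; linarith
    have h1 : p ^ r ≤ p ^ ((m:ℝ) - 1) :=
      Real.rpow_le_rpow_of_exponent_ge hp0 hp1.le hrlow
    have h2 : p ^ ((m:ℝ) - 1) = p ^ (m:ℕ) / p := by
      rw [Real.rpow_sub hp0, Real.rpow_one, Real.rpow_natCast]
    have hpm : (0:ℝ) < p ^ (m:ℕ) := pow_pos hp0 m
    calc 1 / p ^ (m:ℕ) * p ^ r ≤ 1 / p ^ (m:ℕ) * (p ^ (m:ℕ) / p) := by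
          apply mul_le_mul_of_nonneg_left _ (by positivity)
          rw [← h2]; exact h1
      _ = 1 / p := by field_simp

section EZKlemmas

variable {α0 β0 : ℝ} {N : ℕ}

lemma r2_nonneg (hα0 : 0 < α0) (hN : 1 ≤ N) (k : ℕ) :
    0 ≤ ((N : ℝ) - 1) * (α0 + (k : ℝ)) := by
  have h1 : (1:ℝ) ≤ (N:ℝ) := by exact_mod_cast hN
  have h2 : (0:ℝ) ≤ α0 + (k:ℝ) := by positivity
  nlinarith

lemma EZK_nonneg (hα0 : 0 < α0) (hβ0 : 0 < β0) (hN : 1 ≤ N) (t k : ℕ)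
    {f : ℕ → ℕ → ℝ} (hf : ∀ z κ, 0 ≤ f z κ) : 0 ≤ EZK α0 β0 N t k f := by
  have hp0 := pt_pos hβ0 N t
  have hp1 := pt_lt_one hβ0 N t
  have hr1 : (0:ℝ) ≤ α0 + (k:ℝ) := by positivity
  have hr2 := r2_nonneg hα0 hN k
  refine tsum_nonneg fun z => tsum_nonneg fun κ => ?_
  exact mul_nonneg (mul_nonneg (NB_nonneg hr1 hp0 hp1.le z) (NB_nonneg hr2 hp0 hp1.le κ)) (hf z κ)

lemma EZK_le (hα0 : 0 < α0) (hβ0 : 0 < β0) (hN : 1 ≤ N) (t k : ℕ)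
    {f : ℕ → ℕ → ℝ} {M : ℝ} (hM : 0 ≤ M)
    (hf0 : ∀ z κ, 0 ≤ f z κ) (hfM : ∀ z κ, f z κ ≤ M) :
    EZK α0 β0 N t k f ≤ M / (pt β0 N t) ^ 2 := by
  set p := pt β0 N t with hpdef
  have hp0 := pt_pos hβ0 N t
  have hp1 := pt_lt_one hβ0 N t
  have hr1 : (0:ℝ) ≤ α0 + (k:ℝ) := by positivity
  have hr2 := r2_nonneg hα0 hN k
  set a : ℕ → ℝ := NB (α0 + (k:ℝ)) p with ha
  set b : ℕ → ℝ := NB (((N:ℝ) - 1) * (α0 + (k:ℝ))) p with hb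
  have ha0 : ∀ z, 0 ≤ a z := NB_nonneg hr1 hp0 hp1.le
  have hb0 : ∀ κ, 0 ≤ b κ := NB_nonneg hr2 hp0 hp1.le
  have hsa : Summable a := summable_NB hr1 hp0 hp1
  have hsb : Summable b := summable_NB hr2 hp0 hp1
  have hSa : (∑' z, a z) ≤ 1 / p := tsum_NB_le hr1 hp0 hp1
  have hSb : (∑' κ, b κ) ≤ 1 / p := tsum_NB_le hr2 hp0 hp1
  have hSa0 : 0 ≤ ∑' z, a z := tsum_nonneg ha0
  have hSb0 : 0 ≤ ∑' κ, b κ := tsum_nonneg hb0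
  have hinner_le : ∀ z, (∑' κ, a z * b κ * f z κ) ≤ a z * (M * ∑' κ, b κ) := by
    intro z
    have hs2 : Summable (fun κ => a z * b κ * M) := (hsb.mul_left (a z)).mul_right M
    have hle : ∀ κ, a z * b κ * f z κ ≤ a z * b κ * M := fun κ =>
      mul_le_mul_of_nonneg_left (hfM z κ) (mul_nonneg (ha0 z) (hb0 κ))
    have hs1 : Summable (fun κ => a z * b κ * f z κ) :=
      Summable.of_nonneg_of_le (fun κ => mul_nonneg (mul_nonneg (ha0 z) (hb0 κ)) (hf0 z κ)) hle hs2
    calc (∑' κ, a z * b κ * f z κ) ≤ ∑' κ, a z * b κ * M := Summable.tsum_le_tsum hle hs1 hs2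
      _ = a z * (M * ∑' κ, b κ) := by
          rw [show (fun κ => a z * b κ * M) = fun κ => (a z * M) * b κ from
            funext fun κ => by ring, tsum_mul_left]
          ring
  have hinner0 : ∀ z, 0 ≤ ∑' κ, a z * b κ * f z κ := fun z =>
    tsum_nonneg fun κ => mul_nonneg (mul_nonneg (ha0 z) (hb0 κ)) (hf0 z κ)
  have houter_s : Summable (fun z => a z * (M * ∑' κ, b κ)) := hsa.mul_right _
  have hsF : Summable (fun z => ∑' κ, a z * b κ * f z κ) :=
    Summable.of_nonneg_of_le hinner0 hinner_le houter_s
  have hmain : EZK α0 β0 N t k f ≤ (∑' z, a z) * (M * ∑' κ, b κ) := by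
    calc EZK α0 β0 N t k f = ∑' z, ∑' κ, a z * b κ * f z κ := rfl
      _ ≤ ∑' z, a z * (M * ∑' κ, b κ) := Summable.tsum_le_tsum hinner_le hsF houter_s
      _ = (∑' z, a z) * (M * ∑' κ, b κ) := tsum_mul_right
  refine hmain.trans ?_
  have h1 : (∑' z, a z) * (M * ∑' κ, b κ) ≤ (1/p) * (M * (1/p)) := by
    apply mul_le_mul hSa (mul_le_mul_of_nonneg_left hSb hM) (mul_nonneg hM hSb0)
      (by positivity)
  refine h1.trans_eq ?_
  ring

lemma EZK_diff_le (hα0 : 0 < α0) (hβ0 : 0 < β0) (hN : 1 ≤ N) (t k : ℕ) (ξ : ℕ)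
    {f g : ℕ → ℕ → ℝ} {M : ℝ} (hM : 0 ≤ M)
    (hf0 : ∀ z κ, 0 ≤ f z κ) (hfM : ∀ z κ, f z κ ≤ M)
    (hg0 : ∀ z κ, 0 ≤ g z κ) (hgM : ∀ z κ, g z κ ≤ M)
    (hfg : ∀ z κ, ξ ≤ z → f z κ = g z κ) :
    EZK α0 β0 N t k f - EZK α0 β0 N t k g ≤
      (∑ z ∈ Finset.range ξ, NB (α0 + (k:ℝ)) (pt β0 N t) z) * (M / pt β0 N t) := by
  set p := pt β0 N t with hpdef
  have hp0 := pt_pos hβ0 N t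
  have hp1 := pt_lt_one hβ0 N t
  have hr1 : (0:ℝ) ≤ α0 + (k:ℝ) := by positivity
  have hr2 := r2_nonneg hα0 hN k
  set a : ℕ → ℝ := NB (α0 + (k:ℝ)) p with ha
  set b : ℕ → ℝ := NB (((N:ℝ) - 1) * (α0 + (k:ℝ))) p with hb
  have ha0 : ∀ z, 0 ≤ a z := NB_nonneg hr1 hp0 hp1.le
  have hb0 : ∀ κ, 0 ≤ b κ := NB_nonneg hr2 hp0 hp1.le
  have hsa : Summable a := summable_NB hr1 hp0 hp1
  have hsb : Summable b := summable_NB hr2 hp0 hp1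
  have hSb : (∑' κ, b κ) ≤ 1 / p := tsum_NB_le hr2 hp0 hp1
  have hSb0 : 0 ≤ ∑' κ, b κ := tsum_nonneg hb0
  have key : ∀ (h : ℕ → ℕ → ℝ), (∀ z κ, 0 ≤ h z κ) → (∀ z κ, h z κ ≤ M) →
      (∀ z, 0 ≤ ∑' κ, a z * b κ * h z κ) ∧
      (∀ z, (∑' κ, a z * b κ * h z κ) ≤ a z * (M / p)) ∧
      Summable (fun z => ∑' κ, a z * b κ * h z κ) := by
    intro h h0 hMh
    have hinner0 : ∀ z, 0 ≤ ∑' κ, a z * b κ * h z κ := fun z =>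
      tsum_nonneg fun κ => mul_nonneg (mul_nonneg (ha0 z) (hb0 κ)) (h0 z κ)
    have hinner_le : ∀ z, (∑' κ, a z * b κ * h z κ) ≤ a z * (M / p) := by
      intro z
      have hs2 : Summable (fun κ => a z * b κ * M) := (hsb.mul_left (a z)).mul_right M
      have hle : ∀ κ, a z * b κ * h z κ ≤ a z * b κ * M := fun κ =>
        mul_le_mul_of_nonneg_left (hMh z κ) (mul_nonneg (ha0 z) (hb0 κ))
      have hs1 : Summable (fun κ => a z * b κ * h z κ) :=
        Summable.of_nonneg_of_le (fun κ => mul_nonneg (mul_nonneg (ha0 z) (hb0 κ)) (h0 z κ))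
          hle hs2
      calc (∑' κ, a z * b κ * h z κ) ≤ ∑' κ, a z * b κ * M := Summable.tsum_le_tsum hle hs1 hs2
        _ = (a z * M) * ∑' κ, b κ := by
            rw [show (fun κ => a z * b κ * M) = fun κ => (a z * M) * b κ from
              funext fun κ => by ring, tsum_mul_left]
        _ ≤ (a z * M) * (1/p) := by
            apply mul_le_mul_of_nonneg_left hSb (mul_nonneg (ha0 z) hM)
        _ = a z * (M / p) := by ring
    have hsF : Summable (fun z => ∑' κ, a z * b κ * h z κ) :=
      Summable.of_nonneg_of_le hinner0 hinner_le (hsa.mul_right _)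
    exact ⟨hinner0, hinner_le, hsF⟩
  obtain ⟨hF0, hFle, hsF⟩ := key f hf0 hfM
  obtain ⟨hG0, hGle, hsG⟩ := key g hg0 hgM
  have heq : EZK α0 β0 N t k f - EZK α0 β0 N t k g =
      ∑' z, ((∑' κ, a z * b κ * f z κ) - (∑' κ, a z * b κ * g z κ)) := by
    rw [Summable.tsum_sub hsF hsG]; rfl
  rw [heq]
  have hsupp : ∀ z ∉ Finset.range ξ,
      ((∑' κ, a z * b κ * f z κ) - (∑' κ, a z * b κ * g z κ)) = 0 := by
    intro z hz
    have hzξ : ξ ≤ z := by simpa using hz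
    have : (fun κ => a z * b κ * f z κ) = fun κ => a z * b κ * g z κ :=
      funext fun κ => by rw [hfg z κ hzξ]
    rw [this, sub_self]
  rw [tsum_eq_sum hsupp, Finset.sum_mul]
  apply Finset.sum_le_sum
  intro z _
  have := hFle z
  have := hG0 z
  linarith

end EZKlemmas

lemma NB_tendsto_zero {α0 p : ℝ} (hα0 : 0 < α0) (hp0 : 0 < p) (hp1 : p < 1) (z : ℕ) :
    Tendsto (fun k : ℕ => NB (α0 + (k:ℝ)) p z) atTop (nhds 0) := by
  have hq0 : (0:ℝ) ≤ 1 - p := by linarith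
  set C : ℝ := (α0 + (z:ℝ) + 1) ^ z * (1 - p) ^ z / (Nat.factorial z : ℝ) * p ^ α0 with hC
  have hbound : ∀ k : ℕ, 1 ≤ k → NB (α0 + (k:ℝ)) p z ≤ C * ((k:ℝ) ^ z * p ^ k) := by
    intro k hk
    have hk' : (1:ℝ) ≤ (k:ℝ) := by exact_mod_cast hk
    have hr : (0:ℝ) < α0 + (k:ℝ) := by positivity
    rw [NB_eq hr]
    have hprod : (∏ i ∈ Finset.range z, (α0 + (k:ℝ) + (i:ℝ))) ≤ ((α0 + (z:ℝ) + 1) * (k:ℝ)) ^ z := by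
      calc (∏ i ∈ Finset.range z, (α0 + (k:ℝ) + (i:ℝ)))
          ≤ ∏ _i ∈ Finset.range z, ((α0 + (z:ℝ) + 1) * (k:ℝ)) := by
            apply Finset.prod_le_prod
            · intro i _; positivity
            · intro i hi
              have hiz : (i:ℝ) ≤ (z:ℝ) := by
                exact_mod_cast (Finset.mem_range.1 hi).le
              nlinarith
        _ = ((α0 + (z:ℝ) + 1) * (k:ℝ)) ^ z := by
            rw [Finset.prod_const, Finset.card_range]
    have hrw : p ^ (α0 + (k:ℝ)) = p ^ α0 * p ^ k := by
      rw [Real.rpow_add hp0, Real.rpow_natCast]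
    have h3 : (0:ℝ) < (Nat.factorial z : ℝ) := by exact_mod_cast z.factorial_pos
    have h4 : (0:ℝ) ≤ p ^ (α0 + (k:ℝ)) := (Real.rpow_pos_of_pos hp0 _).le
    have h5 : (0:ℝ) ≤ (1 - p) ^ z := pow_nonneg hq0 z
    calc (∏ i ∈ Finset.range z, (α0 + (k:ℝ) + (i:ℝ))) / (Nat.factorial z : ℝ)
          * p ^ (α0 + (k:ℝ)) * (1 - p) ^ z
        ≤ ((α0 + (z:ℝ) + 1) * (k:ℝ)) ^ z / (Nat.factorial z : ℝ)
          * p ^ (α0 + (k:ℝ)) * (1 - p) ^ z := by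
          apply mul_le_mul_of_nonneg_right _ h5
          apply mul_le_mul_of_nonneg_right _ h4
          exact div_le_div_of_nonneg_right hprod h3.le
      _ = C * ((k:ℝ) ^ z * p ^ k) := by
          rw [hrw, mul_pow, hC]; ring
  have hsum : Summable (fun k : ℕ => (k:ℝ) ^ z * p ^ k) := by
    apply Summable.of_norm
    exact summable_norm_pow_mul_geometric_of_norm_lt_one z
      (by rw [Real.norm_eq_abs, abs_lt]; constructor <;> linarith)
  have hlim : Tendsto (fun k : ℕ => C * ((k:ℝ) ^ z * p ^ k)) atTop (nhds 0) := by
    have := (hsum.tendsto_atTop_zero).const_mul C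
    simpa using this
  apply squeeze_zero'
    (Eventually.of_forall fun k => NB_nonneg (by positivity) hp0 hp1.le z)
    (eventually_atTop.2 ⟨1, hbound⟩) hlim

/-- As the pooled data `k` grows, preventive replacement becomes strictly suboptimal
at every `x < ξ`; consequently any optimal control limit `δ^{(k,t)}` converges to `ξ`. -/
theorem control_limit_to_threshold
    (α0 β0 : ℝ) (hα0 : 0 < α0) (hβ0 : 0 < β0)
    (N T : ℕ) (hN : 1 ≤ N) (hT : 1 ≤ T)
    (ξ : ℕ) (hξ : 1 ≤ ξ)
    (cp cu : ℝ) (hcp : 0 < cp) (hcpcu : cp < cu)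
    (V : ℕ → ℕ → ℕ → ℝ)
    (hVT : ∀ x k, V T x k = if ξ ≤ x then cu else 0)
    (hVfail : ∀ t, t < T → ∀ x k, ξ ≤ x →
      V t x k = cu + EZK α0 β0 N t k (fun z κ => V (t + 1) z (k + z + κ)))
    (hVop : ∀ t, t < T → ∀ x k, x < ξ →
      V t x k =
        min (cp + EZK α0 β0 N t k (fun z κ => V (t + 1) z (k + z + κ)))
          (EZK α0 β0 N t k (fun z κ => V (t + 1) (x + z) (k + z + κ)))) :
    ∀ t, t < T →
      ((∀ x : ℕ, x < ξ → ∃ k0 : ℕ, ∀ k : ℕ, k0 ≤ k →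
          EZK α0 β0 N t k (fun z κ => V (t + 1) (x + z) (k + z + κ)) <
            cp + EZK α0 β0 N t k (fun z κ => V (t + 1) z (k + z + κ))) ∧
        (∀ δ : ℕ → ℕ,
          (∀ k : ℕ, 0 < δ k ∧ δ k ≤ ξ ∧
            ∀ x : ℕ, x < ξ →
              ((cp + EZK α0 β0 N t k (fun z κ => V (t + 1) z (k + z + κ)) ≤
                  EZK α0 β0 N t k (fun z κ => V (t + 1) (x + z) (k + z + κ))) ↔ δ k ≤ x)) →
          Filter.Tendsto δ Filter.atTop (nhds ξ))) := by
  have hcu : 0 < cu := hcp.trans hcpcu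
  have key : ∀ d t', t' + d = T → ∃ M : ℝ, 0 ≤ M ∧ ∀ x k, 0 ≤ V t' x k ∧ V t' x k ≤ M := by
    intro d
    induction d with
    | zero =>
      intro t' ht'
      refine ⟨cu, hcu.le, fun x k => ?_⟩
      have hT' : t' = T := by omega
      subst hT'
      rw [hVT]
      split
      · exact ⟨hcu.le, le_refl _⟩
      · exact ⟨le_refl _, hcu.le⟩
    | succ d ih =>
      intro t' ht'
      obtain ⟨M, hM0, hMb⟩ := ih (t' + 1) (by omega)
      have ht'T : t' < T := by omega
      have hp0 := pt_pos hβ0 N t'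
      have hMp : 0 ≤ M / (pt β0 N t') ^ 2 := by positivity
      refine ⟨cu + M / (pt β0 N t') ^ 2, by linarith, fun x k => ?_⟩
      have hE0 : 0 ≤ EZK α0 β0 N t' k (fun z κ => V (t' + 1) z (k + z + κ)) :=
        EZK_nonneg hα0 hβ0 hN t' k (fun z κ => (hMb _ _).1)
      have hE1 : EZK α0 β0 N t' k (fun z κ => V (t' + 1) z (k + z + κ)) ≤ M / (pt β0 N t') ^ 2 :=
        EZK_le hα0 hβ0 hN t' k hM0 (fun z κ => (hMb _ _).1) (fun z κ => (hMb _ _).2)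
      rcases le_or_gt ξ x with hx | hx
      · rw [hVfail t' ht'T x k hx]
        exact ⟨by linarith, by linarith⟩
      · rw [hVop t' ht'T x k hx]
        have hEx0 : 0 ≤ EZK α0 β0 N t' k (fun z κ => V (t' + 1) (x + z) (k + z + κ)) :=
          EZK_nonneg hα0 hβ0 hN t' k (fun z κ => (hMb _ _).1)
        constructor
        · exact le_min (by linarith) hEx0
        · exact (min_le_left _ _).trans (by linarith)
  intro t htT
  obtain ⟨M, hM0, hMb⟩ := key (T - (t + 1)) (t + 1) (by omega)
  have hp0 := pt_pos hβ0 N t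
  have hp1 := pt_lt_one hβ0 N t
  have hirr : ∀ x' m, ξ ≤ x' → V (t + 1) x' m = V (t + 1) ξ m := by
    intro x' m hx'
    rcases eq_or_lt_of_le (show t + 1 ≤ T by omega) with hEq | hLt
    · rw [hEq, hVT, hVT, if_pos hx', if_pos (le_refl ξ)]
    · rw [hVfail (t + 1) hLt x' m hx', hVfail (t + 1) hLt ξ m (le_refl ξ)]
  have hmain : ∀ x : ℕ, x < ξ → ∃ k0 : ℕ, ∀ k : ℕ, k0 ≤ k →
      EZK α0 β0 N t k (fun z κ => V (t + 1) (x + z) (k + z + κ)) <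
        cp + EZK α0 β0 N t k (fun z κ => V (t + 1) z (k + z + κ)) := by
    intro x hx
    have hS : Tendsto (fun k : ℕ =>
        (∑ z ∈ Finset.range ξ, NB (α0 + (k:ℝ)) (pt β0 N t) z) * (M / pt β0 N t))
        atTop (nhds 0) := by
      have h1 : Tendsto (fun k : ℕ => ∑ z ∈ Finset.range ξ, NB (α0 + (k:ℝ)) (pt β0 N t) z)
          atTop (nhds 0) := by
        have := tendsto_finset_sum (Finset.range ξ)
          (fun z _ => NB_tendsto_zero hα0 hp0 hp1 z)
        simpa using this
      simpa using h1.mul_const (M / pt β0 N t)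
    have hev : ∀ᶠ k : ℕ in atTop,
        (∑ z ∈ Finset.range ξ, NB (α0 + (k:ℝ)) (pt β0 N t) z) * (M / pt β0 N t) < cp :=
      hS.eventually (gt_mem_nhds hcp)
    obtain ⟨k0, hk0⟩ := eventually_atTop.1 hev
    refine ⟨k0, fun k hk => ?_⟩
    have hdiff := EZK_diff_le hα0 hβ0 hN t k ξ
      (f := fun z κ => V (t + 1) (x + z) (k + z + κ))
      (g := fun z κ => V (t + 1) z (k + z + κ)) hM0
      (fun z κ => (hMb _ _).1) (fun z κ => (hMb _ _).2)
      (fun z κ => (hMb _ _).1) (fun z κ => (hMb _ _).2)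
      (fun z κ hz => by
        show V (t + 1) (x + z) (k + z + κ) = V (t + 1) z (k + z + κ)
        rw [hirr (x + z) _ (by omega), hirr z _ hz])
    have hlt := hk0 k hk
    linarith
  refine ⟨hmain, ?_⟩
  intro δ hδ
  obtain ⟨k0, hk0⟩ := hmain (ξ - 1) (by omega)
  have hev : ∀ᶠ k in atTop, δ k = ξ := by
    refine eventually_atTop.2 ⟨k0, fun k hk => ?_⟩
    obtain ⟨h1, h2, h3⟩ := hδ k
    have h4 := h3 (ξ - 1) (by omega)
    have h5 := hk0 k hk
    have h6 : ¬ (δ k ≤ ξ - 1) := fun hle => absurd (h4.mpr hle) (not_le.2 h5)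
    omega
  exact tendsto_const_nhds.congr' (hev.mono fun k hk => hk.symm)
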